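/- Let D, S ∈ ℝ^{m×m} be diagonal with D and S invertible, and suppose the diagonal entries of D²S⁻²D² are pairwise distinct and nonzero. Let Q₁ ∈ ℝ^{k×m}, Q₂ ∈ ℝ^{m×k} satisfy Q₂ᵀQ₂Q₁S² = Q₂ᵀD² and Q₂Q₁S²Q₁ᵀ = D²Q₁ᵀ, and set Q = Q₂Q₁. Then the matrix D⁻²S²Qᵀ is symmetric, idempotent, and diagonal with every diagonal entry equal to 0 or 1. -/

import Mathlib

open Matrix

/-- For diagonal invertible `D, S` with the diagonal entries `dᵢ⁴/sᵢ²` of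
`D²S⁻²D²` pairwise distinct and nonzero, at any critical point of
`L_*(Q₁,Q₂) = tr(Q₂Q₁S²Q₁ᵀQ₂ᵀ − 2Q₂Q₁D²)` the matrix `D⁻²S²Qᵀ` (with
`Q = Q₂Q₁`) is symmetric, idempotent, and diagonal with 0/1 diagonal entries. -/
theorem critical_projection {m k : ℕ} (d s : Fin m → ℝ)
    (hd : ∀ i, d i ≠ 0) (hs : ∀ i, s i ≠ 0)
    (hnz : ∀ i, d i ^ 4 / s i ^ 2 ≠ 0)
    (hdist : ∀ i j : Fin m, i ≠ j → d i ^ 4 / s i ^ 2 ≠ d j ^ 4 / s j ^ 2)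
    (Q1 : Matrix (Fin k) (Fin m) ℝ) (Q2 : Matrix (Fin m) (Fin k) ℝ)
    (h1 : Q2ᵀ * Q2 * Q1 * Matrix.diagonal (fun i => s i ^ 2) =
          Q2ᵀ * Matrix.diagonal (fun i => d i ^ 2))
    (h2 : Q2 * Q1 * Matrix.diagonal (fun i => s i ^ 2) * Q1ᵀ =
          Matrix.diagonal (fun i => d i ^ 2) * Q1ᵀ)
    (M : Matrix (Fin m) (Fin m) ℝ)
    (hM : M = Matrix.diagonal (fun i => s i ^ 2 / d i ^ 2) * (Q2 * Q1)ᵀ) :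
    Mᵀ = M ∧ M * M = M ∧ M.IsDiag ∧ ∀ i, M i i = 0 ∨ M i i = 1 := by
  set Q := Q2 * Q1 with hQdef
  -- (A) : Q S² Qᵀ = D² Qᵀ
  have hA : Q * Matrix.diagonal (fun i => s i ^ 2) * Qᵀ =
      Matrix.diagonal (fun i => d i ^ 2) * Qᵀ := by
    have h := congrArg (fun X => X * Q2ᵀ) h2
    simp only [hQdef, Matrix.transpose_mul, Matrix.mul_assoc] at h ⊢
    exact h
  -- (B) : Qᵀ Q S² = Qᵀ D²
  have hB : Qᵀ * Q * Matrix.diagonal (fun i => s i ^ 2) =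
      Qᵀ * Matrix.diagonal (fun i => d i ^ 2) := by
    have h := congrArg (fun X => Q1ᵀ * X) h1
    simp only [hQdef, Matrix.transpose_mul, Matrix.mul_assoc] at h ⊢
    exact h
  -- (C) : D² Qᵀ = Q D²  (transpose of (A), since the LHS of (A) is symmetric)
  have hC : Matrix.diagonal (fun i => d i ^ 2) * Qᵀ =
      Q * Matrix.diagonal (fun i => d i ^ 2) := by
    have h := congrArg Matrix.transpose hA
    simp only [Matrix.transpose_mul, Matrix.transpose_transpose,
      Matrix.diagonal_transpose, ← Matrix.mul_assoc] at h
    exact hA.symm.trans h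
  -- off-diagonal entries of Q vanish
  have hQoff : ∀ i j : Fin m, i ≠ j → Q i j = 0 := by
    intro i j hij
    have hbij : (Qᵀ * Q) i j * s j ^ 2 = Q j i * d j ^ 2 := by
      have h := congrFun (congrFun hB i) j
      simpa [Matrix.mul_diagonal, Matrix.transpose_apply] using h
    have hbji : (Qᵀ * Q) j i * s i ^ 2 = Q i j * d i ^ 2 := by
      have h := congrFun (congrFun hB j) i
      simpa [Matrix.mul_diagonal, Matrix.transpose_apply] using h
    have hsym : (Qᵀ * Q) j i = (Qᵀ * Q) i j := by
      simp only [Matrix.mul_apply, Matrix.transpose_apply]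
      exact Finset.sum_congr rfl fun x _ => mul_comm _ _
    rw [hsym] at hbji
    have hcij : d i ^ 2 * Q j i = Q i j * d j ^ 2 := by
      have h := congrFun (congrFun hC i) j
      simpa [Matrix.diagonal_mul, Matrix.mul_diagonal, Matrix.transpose_apply] using h
    set t := (Qᵀ * Q) i j with htdef
    have key : t * (d i ^ 4 * s j ^ 2) = t * (s i ^ 2 * d j ^ 4) := by
      linear_combination d i ^ 4 * hbij - d j ^ 4 * hbji +
        (d i ^ 2 * d j ^ 2) * hcij
    have hne : d i ^ 4 * s j ^ 2 ≠ s i ^ 2 * d j ^ 4 := by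
      intro h
      apply hdist i j hij
      rw [div_eq_div_iff (pow_ne_zero 2 (hs i)) (pow_ne_zero 2 (hs j))]
      linear_combination h
    have ht : t = 0 := by
      by_contra ht
      exact hne (mul_left_cancel₀ ht key)
    have : Q i j * d i ^ 2 = 0 := by rw [← hbji, ht, zero_mul]
    exact (mul_eq_zero.mp this).resolve_right (pow_ne_zero 2 (hd i))
  -- diagonal equation : qᵢ sᵢ² qᵢ = dᵢ² qᵢ
  have hdiagval : ∀ i : Fin m, Q i i * s i ^ 2 * Q i i = d i ^ 2 * Q i i := by
    intro i
    have h := congrFun (congrFun hA i) i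
    rw [Matrix.mul_apply] at h
    simp only [Matrix.mul_diagonal, Matrix.transpose_apply, Matrix.diagonal_mul] at h
    rwa [Finset.sum_eq_single i
      (fun b _ hb => by rw [hQoff i b (Ne.symm hb)]; ring)
      (fun h => absurd (Finset.mem_univ i) h)] at h
  -- M is the diagonal matrix with entries sᵢ²/dᵢ² · qᵢ
  have hM' : M = Matrix.diagonal (fun i => s i ^ 2 / d i ^ 2 * Q i i) := by
    rw [hM]
    ext i j
    by_cases hij : i = j
    · subst hij
      simp [Matrix.diagonal_mul, Matrix.transpose_apply]
    · simp [Matrix.diagonal_mul, Matrix.transpose_apply,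
        Matrix.diagonal_apply_ne _ hij, hQoff j i (Ne.symm hij)]
  have hval : ∀ i : Fin m,
      s i ^ 2 / d i ^ 2 * Q i i = 0 ∨ s i ^ 2 / d i ^ 2 * Q i i = 1 := by
    intro i
    rcases eq_or_ne (Q i i) 0 with h | h
    · left; rw [h, mul_zero]
    · right
      have hq : Q i i * s i ^ 2 = d i ^ 2 := mul_right_cancel₀ h (hdiagval i)
      rw [div_mul_eq_mul_div, div_eq_one_iff_eq (pow_ne_zero 2 (hd i))]
      linear_combination hq
  refine ⟨?_, ?_, ?_, ?_⟩
  · rw [hM', Matrix.diagonal_transpose]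
  · rw [hM', Matrix.diagonal_mul_diagonal]
    have hfun : (fun i => s i ^ 2 / d i ^ 2 * Q i i * (s i ^ 2 / d i ^ 2 * Q i i)) =
        fun i => s i ^ 2 / d i ^ 2 * Q i i := by
      funext i
      rcases hval i with h | h <;> rw [h] <;> ring
    rw [hfun]
  · rw [hM']; exact Matrix.isDiag_diagonal _
  · intro i
    rw [hM', Matrix.diagonal_apply_eq]
    exact hval i
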